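/- Let z̃ : [0,2] → ℝ be defined by z̃(t) = 0 for t ∈ [0,1] and z̃(t) = 1/2 for t ∈ (1,2], let R(z) = |z|, and let I(t,z) = (1/2)z² − z (corresponding to the zero load ℓ ≡ 0). Then for every t₂ ∈ (1,2]: I(t₂, z̃(t₂)) + Diss_R(z̃; [0,t₂]) = 1/8 > 0 = I(0, z̃(0)). In particular, z̃ violates the energy inequality required of a local solution of the rate-independent system with ℓ ≡ 0 (for which the load term on the right-hand side vanishes), so z̃ is not a local solution. (Inequality (4.37), Section 4.2) -/

import Mathlib

open MeasureTheory Set Filter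
open scoped Topology

noncomputable section

/-- The R-dissipation of `z` on `[a,b]`: supremum over all finite partitions
`a = ξ₀ < ξ₁ < … < ξ_n = b` of `∑ R(z(ξ_i) - z(ξ_{i-1}))`. -/
def Diss {X : Type*} [NormedAddCommGroup X] (R : X → ℝ) (z : ℝ → X) (a b : ℝ) : ℝ :=
  sSup {v : ℝ | ∃ (n : ℕ) (ξ : Fin (n + 1) → ℝ), StrictMono ξ ∧ ξ 0 = a ∧
    ξ (Fin.last n) = b ∧ v = ∑ i : Fin n, R (z (ξ i.succ) - z (ξ i.castSucc))}

/-- The energy `I(t,z) = z²/2 - z` corresponding to the zero load. -/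
def En1 (z : ℝ) : ℝ := (1 / 2) * z ^ 2 - z

/-- The pointwise limit `z̃` of the differential solutions in (4.36). -/
def ztilde (t : ℝ) : ℝ := if t ≤ 1 then 0 else 1 / 2

lemma ztilde_mono : Monotone ztilde := by
  intro x y h
  unfold ztilde
  split_ifs with hx hy hy <;> norm_num
  exact hx (h.trans hy)

lemma diss_mono_eq (z : ℝ → ℝ) (hz : Monotone z) (a b : ℝ) (hab : a < b) :
    Diss (fun w : ℝ => |w|) z a b = z b - z a := by
  have hset : {v : ℝ | ∃ (n : ℕ) (ξ : Fin (n + 1) → ℝ), StrictMono ξ ∧ ξ 0 = a ∧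
      ξ (Fin.last n) = b ∧ v = ∑ i : Fin n, |z (ξ i.succ) - z (ξ i.castSucc)|}
      = {z b - z a} := by
    ext v
    simp only [Set.mem_setOf_eq, Set.mem_singleton_iff]
    constructor
    · rintro ⟨n, ξ, hξ, h0, hl, rfl⟩
      have key : ∀ i : Fin n, |z (ξ i.succ) - z (ξ i.castSucc)| =
          z (ξ i.succ) - z (ξ i.castSucc) := by
        intro i
        apply abs_of_nonneg
        have := hz (le_of_lt (hξ (Fin.castSucc_lt_succ : i.castSucc < i.succ)))
        linarith
      simp only [key]
      set f : ℕ → ℝ := fun k => z (ξ ⟨min k n, Nat.lt_succ_of_le (min_le_right _ _)⟩) with hf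
      have hterm : ∀ i : Fin n, z (ξ i.succ) - z (ξ i.castSucc) = f (i + 1) - f i := by
        intro i
        have h1 : (⟨min (i + 1) n, Nat.lt_succ_of_le (min_le_right _ _)⟩ : Fin (n+1)) = i.succ := by
          ext; simp [Nat.min_eq_left i.is_lt]
        have h2 : (⟨min (i : ℕ) n, Nat.lt_succ_of_le (min_le_right _ _)⟩ : Fin (n+1)) = i.castSucc := by
          ext; simp [Nat.min_eq_left (le_of_lt i.is_lt)]
        simp only [hf]; rw [h1, h2]
      rw [Finset.sum_congr rfl (fun i _ => hterm i),
        Fin.sum_univ_eq_sum_range (fun k => f (k + 1) - f k) n, Finset.sum_range_sub f]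
      have hfn : f n = z b := by
        rw [hf]; simp only [Nat.min_self]
        rw [show (⟨n, Nat.lt_succ_of_le le_rfl⟩ : Fin (n+1)) = Fin.last n from rfl, hl]
      have hf0 : f 0 = z a := by
        rw [hf]; simp only [Nat.zero_min]
        rw [show (⟨0, Nat.lt_succ_of_le (Nat.zero_le n)⟩ : Fin (n+1)) = 0 from rfl, h0]
      rw [hfn, hf0]
    · rintro rfl
      refine ⟨1, ![a, b], ?_, rfl, rfl, ?_⟩
      · intro i j hij
        fin_cases i <;> fin_cases j <;> simp_all [hab]
      · simp [abs_of_nonneg (by linarith [hz hab.le] : (0:ℝ) ≤ z b - z a)]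
  unfold Diss
  rw [hset, csSup_singleton]

/-- **Inequality (4.37), Section 4.2.** The limit `z̃` violates the energy inequality of a
local solution for the zero load: for every `t₂ ∈ (1,2]`,
`I(t₂, z̃(t₂)) + Diss(z̃;[0,t₂]) = 1/8 > 0 = I(0, z̃(0))`; hence `z̃` is not a local
solution. -/
theorem ztilde_not_local_solution :
    (∀ t₂ ∈ Ioc (1 : ℝ) 2,
      En1 (ztilde t₂) + Diss (fun z : ℝ => |z|) ztilde 0 t₂ = 1 / 8) ∧
    En1 (ztilde 0) = 0 ∧ (0 : ℝ) < 1 / 8 ∧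
    ¬ (∀ t₁ t₂ : ℝ, 0 ≤ t₁ → t₁ ≤ t₂ → t₂ ≤ 2 →
        En1 (ztilde t₂) + Diss (fun z : ℝ => |z|) ztilde t₁ t₂ ≤ En1 (ztilde t₁)) := by
  have hkey : ∀ t₂ ∈ Ioc (1 : ℝ) 2,
      En1 (ztilde t₂) + Diss (fun z : ℝ => |z|) ztilde 0 t₂ = 1 / 8 := by
    rintro t₂ ⟨h1, h2⟩
    rw [diss_mono_eq ztilde ztilde_mono 0 t₂ (by linarith)]
    have hz2 : ztilde t₂ = 1 / 2 := by simp [ztilde, not_le.mpr h1]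
    have hz0 : ztilde 0 = 0 := by norm_num [ztilde]
    rw [hz2, hz0]; norm_num [En1]
  refine ⟨hkey, by norm_num [ztilde, En1], by norm_num, fun h => ?_⟩
  have h2 := h 0 2 le_rfl (by norm_num) le_rfl
  have h3 := hkey 2 (by norm_num)
  have h0 : En1 (ztilde 0) = 0 := by norm_num [ztilde, En1]
  rw [h3, h0] at h2
  norm_num at h2

end
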